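/- arXiv:1510.00930 — 2 statements merged into one kernel-verified Lean document; each statement's English description precedes it below -/
import Mathlib

section
/- If two k-dimensional subspaces X, Y of V are both adjacent to a common k-dimensional subspace Z in the Grassmann graph and dim(X ∩ Y) = k - 2, then either X ∩ Y ⊂ Z (Z belongs to the 'top' of X,Y) or Z ⊂ X + Y (Z belongs to the 'star'), i.e., Z contains X ∩ Y or is contained in X + Y. -/
open Module

theorem common_neighbor_star_or_top {K V : Type*} [Field K] [AddCommGroup V]
    [Module K V] [FiniteDimensional K V] {k : ℕ} (hk : 2 ≤ k)
    (X Y Z : Submodule K V)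
    (hX : finrank K ↥X = k) (hY : finrank K ↥Y = k) (hZ : finrank K ↥Z = k)
    (hXY : finrank K ↥(X ⊓ Y) = k - 2)
    (hXZ : X ≠ Z ∧ finrank K ↥(X ⊓ Z) = k - 1)
    (hYZ : Y ≠ Z ∧ finrank K ↥(Y ⊓ Z) = k - 1) :
    X ⊓ Y ≤ Z ∨ Z ≤ X ⊔ Y := by
  left
  have hsum := Submodule.finrank_sup_add_finrank_inf_eq (X ⊓ Z) (Y ⊓ Z)
  have hle : (X ⊓ Z) ⊔ (Y ⊓ Z) ≤ Z := sup_le inf_le_right inf_le_right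
  have h1 : finrank K ↥((X ⊓ Z) ⊔ (Y ⊓ Z)) ≤ k := hZ ▸ Submodule.finrank_mono hle
  have heq : (X ⊓ Z) ⊓ (Y ⊓ Z) = X ⊓ Y ⊓ Z := by
    simp [inf_assoc, inf_comm, inf_left_comm]
  rw [heq, hXZ.2, hYZ.2] at hsum
  have h2 : X ⊓ Y ⊓ Z ≤ X ⊓ Y := inf_le_left
  have h3 : finrank K ↥(X ⊓ Y ⊓ Z) ≤ k - 2 := hXY ▸ Submodule.finrank_mono h2
  have h4 : finrank K ↥(X ⊓ Y) ≤ finrank K ↥(X ⊓ Y ⊓ Z) := by omega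
  have h5 : X ⊓ Y ⊓ Z = X ⊓ Y := Submodule.eq_of_le_of_finrank_le h2 h4
  exact le_trans (le_of_eq h5.symm) inf_le_right
end

section
/- In an n-dimensional vector space V over a finite field, if a family of k-dimensional subspaces pairwise intersects in subspaces of dimension k-1 and the family is not contained in any star [U⟩_k with dim U = k-1, then all members of the family are contained in a common (k+1)-dimensional subspace. -/
open Module

private lemma exists_le_finrank_eq {K V : Type*} [Field K] [AddCommGroup V] [Module K V]
    [FiniteDimensional K V] (X : Submodule K V) (m : ℕ) (h : m ≤ finrank K ↥X) :
    ∃ U : Submodule K V, U ≤ X ∧ finrank K ↥U = m := by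
  classical
  let b := finBasis K ↥X
  have hli : LinearIndependent K (fun i : Fin m => ((b (Fin.castLE h i) : ↥X) : V)) := by
    have h1 : LinearIndependent K fun i : Fin m => b (Fin.castLE h i) :=
      b.linearIndependent.comp _ (Fin.castLE_injective h)
    exact h1.map' X.subtype (Submodule.ker_subtype X)
  refine ⟨Submodule.span K (Set.range fun i : Fin m => ((b (Fin.castLE h i) : ↥X) : V)), ?_, ?_⟩
  · rw [Submodule.span_le]
    rintro _ ⟨i, rfl⟩
    exact (b (Fin.castLE h i)).2
  · rw [finrank_span_eq_card hli, Fintype.card_fin]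

private lemma sup_eq_of_finrank {K V : Type*} [Field K] [AddCommGroup V] [Module K V]
    [FiniteDimensional K V] {W A B : Submodule K V} {m : ℕ}
    (hA : A ≤ W) (hB : B ≤ W) (hW : finrank K ↥W = m + 1)
    (hAd : finrank K ↥A = m) (hBd : finrank K ↥B = m) (hne : A ≠ B) :
    A ⊔ B = W := by
  have hsup : A ⊔ B ≤ W := sup_le hA hB
  apply Submodule.eq_of_le_of_finrank_eq hsup
  rw [hW]
  have hmono : finrank K ↥(A ⊔ B) ≤ m + 1 := hW ▸ Submodule.finrank_mono hsup
  have hge : m ≤ finrank K ↥(A ⊔ B) := hAd ▸ Submodule.finrank_mono le_sup_left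
  rcases eq_or_lt_of_le hge with heq | hlt
  · exfalso
    have hAeq : A = A ⊔ B := Submodule.eq_of_le_of_finrank_eq le_sup_left (by omega)
    have hBle : B ≤ A := hAeq ▸ le_sup_right
    exact hne (Submodule.eq_of_le_of_finrank_eq hBle (by omega)).symm
  · omega

theorem clique_not_in_star_contained_in_top {K V : Type*} [Field K] [Fintype K]
    [AddCommGroup V] [Module K V] [FiniteDimensional K V] {n k : ℕ}
    (hn : finrank K V = n) (hk1 : 1 ≤ k) (hk2 : k ≤ n - 1)
    (F : Set (Submodule K V)) (hdim : ∀ X ∈ F, finrank K ↥X = k)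
    (hadj : ∀ X ∈ F, ∀ Y ∈ F, X ≠ Y → finrank K ↥(X ⊓ Y) = k - 1)
    (hstar : ¬ ∃ U : Submodule K V, finrank K ↥U = k - 1 ∧ ∀ X ∈ F, U ≤ X) :
    ∃ T : Submodule K V, finrank K ↥T = k + 1 ∧ ∀ X ∈ F, X ≤ T := by
  obtain ⟨m, rfl⟩ : ∃ m, k = m + 1 := ⟨k - 1, (Nat.succ_pred_eq_of_pos hk1).symm⟩
  simp only [Nat.add_sub_cancel] at hadj hstar
  -- Step 1: find X, Y, Z in F with X ≠ Y and ¬ X ⊓ Y ≤ Z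
  have hkey : ∃ X ∈ F, ∃ Y ∈ F, ∃ Z ∈ F, X ≠ Y ∧ ¬ X ⊓ Y ≤ Z := by
    by_contra hcon
    push_neg at hcon
    apply hstar
    rcases Set.eq_empty_or_nonempty F with hF | ⟨X0, hX0⟩
    · obtain ⟨U, _, hU⟩ := exists_le_finrank_eq (⊤ : Submodule K V) m
        (by rw [finrank_top, hn]; omega)
      exact ⟨U, hU, by simp [hF]⟩
    · by_cases hsing : ∃ Y ∈ F, Y ≠ X0
      · obtain ⟨Y, hY, hYne⟩ := hsing
        refine ⟨X0 ⊓ Y, hadj X0 hX0 Y hY (Ne.symm hYne), fun Z hZ => ?_⟩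
        exact hcon X0 hX0 Y hY Z hZ (Ne.symm hYne)
      · push_neg at hsing
        obtain ⟨U, hUle, hU⟩ := exists_le_finrank_eq X0 m
          (by rw [hdim X0 hX0]; omega)
        exact ⟨U, hU, fun X hX => (hsing X hX) ▸ hUle⟩
  obtain ⟨X, hX, Y, hY, Z, hZ, hXY, hZnle⟩ := hkey
  have hZX : Z ≠ X := fun h => hZnle (h ▸ inf_le_left)
  have hZY : Z ≠ Y := fun h => hZnle (h ▸ inf_le_right)
  refine ⟨X ⊔ Y, ?_, ?_⟩
  · have := Submodule.finrank_sup_add_finrank_inf_eq X Y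
    rw [hadj X hX Y hY hXY, hdim X hX, hdim Y hY] at this
    omega
  · -- general lemma: a member W distinct from X and Y with W ⊓ X ≠ W ⊓ Y is ≤ X ⊔ Y
    have key : ∀ W ∈ F, W ≠ X → W ≠ Y → W ⊓ X ≠ W ⊓ Y → W ≤ X ⊔ Y := by
      intro W hW hWX hWY hne
      have h1 : W ⊓ X ⊔ W ⊓ Y = W :=
        sup_eq_of_finrank inf_le_left inf_le_left (hdim W hW)
          (hadj W hW X hX hWX) (hadj W hW Y hY hWY) hne
      calc W = W ⊓ X ⊔ W ⊓ Y := h1.symm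
        _ ≤ X ⊔ Y := sup_le_sup inf_le_right inf_le_right
    -- if W ⊓ X = W ⊓ Y then X ⊓ Y ≤ W
    have key2 : ∀ W ∈ F, W ≠ X → W ≠ Y → W ⊓ X = W ⊓ Y → W ⊓ X = X ⊓ Y := by
      intro W hW hWX hWY heq
      have hle : W ⊓ X ≤ X ⊓ Y := le_inf inf_le_right (heq ▸ inf_le_right)
      exact Submodule.eq_of_le_of_finrank_eq hle
        (by rw [hadj W hW X hX hWX, hadj X hX Y hY hXY])
    have hZT : Z ≤ X ⊔ Y := by
      refine key Z hZ hZX hZY fun heq => ?_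
      exact hZnle ((key2 Z hZ hZX hZY heq) ▸ inf_le_left)
    intro W hW
    by_cases hWX : W = X
    · exact hWX ▸ le_sup_left
    by_cases hWY : W = Y
    · exact hWY ▸ le_sup_right
    by_cases hne : W ⊓ X ≠ W ⊓ Y
    · exact key W hW hWX hWY hne
    push_neg at hne
    have hXYW : X ⊓ Y ≤ W := (key2 W hW hWX hWY hne) ▸ inf_le_left
    have hWZ : W ≠ Z := fun h => hZnle (h ▸ hXYW)
    have hne2 : W ⊓ X ≠ W ⊓ Z := by
      intro h
      apply hZnle
      calc X ⊓ Y = W ⊓ X := (key2 W hW hWX hWY hne).symm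
        _ = W ⊓ Z := h
        _ ≤ Z := inf_le_right
    have h1 : W ⊓ X ⊔ W ⊓ Z = W :=
      sup_eq_of_finrank inf_le_left inf_le_left (hdim W hW)
        (hadj W hW X hX hWX) (hadj W hW Z hZ hWZ) hne2
    calc W = W ⊓ X ⊔ W ⊓ Z := h1.symm
      _ ≤ (X ⊔ Y) ⊔ (X ⊔ Y) := sup_le_sup (inf_le_right.trans le_sup_left) (inf_le_right.trans hZT)
      _ = X ⊔ Y := sup_idem _
end
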